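/- Let H : ℝ^d × ℝ^d → ℝ be a C² Hamiltonian with flow φ_t, and let 𝒦 ⊆ ℝ^d × ℝ^d be compact and convex in the fiber (i.e., (q,p), (q,p') ∈ 𝒦 implies (q, sp + (1-s)p') ∈ 𝒦 for s ∈ [0,1]). Suppose there are constants 0 < c ≤ C such that c‖v‖² ≤ H_{pp}(φ_τ(x))(v,v) ≤ C‖v‖² for all τ ∈ [-1,1], x ∈ 𝒦, v ∈ ℝ^d. Then there exists ε > 0 such that for all t ∈ (0, ε] and all (q,p), (q, p+Δp) ∈ 𝒦, writing (q₀,p₀) = φ_t(q,p) and (q₁,p₁) = φ_t(q,p+Δp), one has ⟪p₁ - p₀, q₁ - q₀⟫ ≥ (c/2)·t·‖Δp‖² and ‖q₁ - q₀‖ ≤ 2C·t·‖Δp‖. -/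

import Mathlib

open scoped RealInnerProductSpace
open Set ContinuousLinearMap
set_option maxHeartbeats 2000000

/-- The Hamiltonian vector field `(∂H/∂p, -∂H/∂q)` of `H` on `ℝ^d × ℝ^d`. -/
noncomputable def HamVF {d : ℕ}
    (H : EuclideanSpace ℝ (Fin d) × EuclideanSpace ℝ (Fin d) → ℝ)
    (z : EuclideanSpace ℝ (Fin d) × EuclideanSpace ℝ (Fin d)) :
    EuclideanSpace ℝ (Fin d) × EuclideanSpace ℝ (Fin d) :=
  (gradient (fun p => H (z.1, p)) z.2, -gradient (fun q => H (q, z.2)) z.1)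

/-- The Hessian of `H` in the `p` variables at `z`, applied to `(v, v)`. -/
noncomputable def Hpp {d : ℕ}
    (H : EuclideanSpace ℝ (Fin d) × EuclideanSpace ℝ (Fin d) → ℝ)
    (z : EuclideanSpace ℝ (Fin d) × EuclideanSpace ℝ (Fin d))
    (v : EuclideanSpace ℝ (Fin d)) : ℝ :=
  ⟪(fderiv ℝ (fun p => gradient (fun p' => H (z.1, p')) p) z.2) v, v⟫


section Aux
variable {d : ℕ}

local notation "E" => EuclideanSpace ℝ (Fin d)

noncomputable def Gpart (J : E →L[ℝ] E × E) (H : E × E → ℝ) (z : E × E) : E :=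
  (InnerProductSpace.toDual ℝ E).symm ((fderiv ℝ H z).comp J)

noncomputable def Phi (J : E →L[ℝ] E × E) : ((E × E) →L[ℝ] ℝ) →L[ℝ] E :=
  ((InnerProductSpace.toDual ℝ E).symm.toContinuousLinearEquiv.toContinuousLinearMap).comp
    ((ContinuousLinearMap.compL ℝ E (E × E) ℝ).flip J)

lemma gradient_fst (H : E × E → ℝ) (hH : ContDiff ℝ 2 H) (z : E × E) :
    gradient (fun q => H (q, z.2)) z.1 = Gpart (ContinuousLinearMap.inl ℝ E E) H z := by
  have h1 : HasFDerivAt H (fderiv ℝ H z) (z.1, z.2) := by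
    rw [Prod.mk.eta]; exact (hH.differentiable two_ne_zero z).hasFDerivAt
  have h2 : HasFDerivAt (fun q : E => ((q, z.2) : E × E))
      (ContinuousLinearMap.inl ℝ E E) z.1 :=
    (hasFDerivAt_id z.1).prodMk (hasFDerivAt_const _ _)
  have h3 : HasFDerivAt (fun q : E => H (q, z.2))
      ((fderiv ℝ H z).comp (ContinuousLinearMap.inl ℝ E E)) z.1 := h1.comp z.1 h2
  unfold gradient Gpart
  rw [h3.fderiv]

lemma gradient_snd (H : E × E → ℝ) (hH : ContDiff ℝ 2 H) (z : E × E) :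
    gradient (fun p => H (z.1, p)) z.2 = Gpart (ContinuousLinearMap.inr ℝ E E) H z := by
  have h1 : HasFDerivAt H (fderiv ℝ H z) (z.1, z.2) := by
    rw [Prod.mk.eta]; exact (hH.differentiable two_ne_zero z).hasFDerivAt
  have h2 : HasFDerivAt (fun p : E => ((z.1, p) : E × E))
      (ContinuousLinearMap.inr ℝ E E) z.2 :=
    (hasFDerivAt_const _ _).prodMk (hasFDerivAt_id z.2)
  have h3 : HasFDerivAt (fun p : E => H (z.1, p))
      ((fderiv ℝ H z).comp (ContinuousLinearMap.inr ℝ E E)) z.2 := h1.comp z.2 h2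
  unfold gradient Gpart
  rw [h3.fderiv]

lemma Gpart_contDiff (H : E × E → ℝ) (hH : ContDiff ℝ 2 H) (J : E →L[ℝ] E × E) : ContDiff ℝ 1 (Gpart J H) := by
  have h1 : ContDiff ℝ 1 (fderiv ℝ H) := hH.fderiv_right (by norm_num)
  have h2 : ContDiff ℝ 1 (fun L : (E × E) →L[ℝ] ℝ => L.comp J) :=
    ((ContinuousLinearMap.compL ℝ E (E × E) ℝ).flip J).contDiff
  have h3 : ContDiff ℝ 1 (fun L : E →L[ℝ] ℝ => (InnerProductSpace.toDual ℝ E).symm L) :=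
    (InnerProductSpace.toDual ℝ E).symm.contDiff
  exact h3.comp (h2.comp h1)

lemma Gpart_hasFDerivAt (H : E × E → ℝ) (hH : ContDiff ℝ 2 H) (J : E →L[ℝ] E × E) (z : E × E) :
    HasFDerivAt (Gpart J H) ((Phi J).comp (fderiv ℝ (fderiv ℝ H) z)) z := by
  have h1 : ContDiff ℝ 1 (fderiv ℝ H) := hH.fderiv_right (by norm_num)
  exact (Phi J).hasFDerivAt.comp z (h1.differentiable one_ne_zero z).hasFDerivAt

lemma inner_Phi (J : E →L[ℝ] E × E) (L : (E × E) →L[ℝ] ℝ) (w : E) :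
    ⟪Phi J L, w⟫ = L (J w) := by
  simp [Phi, InnerProductSpace.toDual_symm_apply]

/-- the p-Hessian operator. -/
noncomputable def Amat (H : E × E → ℝ) (z : E × E) : E →L[ℝ] E :=
  ((Phi (ContinuousLinearMap.inr ℝ E E)).comp (fderiv ℝ (fderiv ℝ H) z)).comp
    (ContinuousLinearMap.inr ℝ E E)

lemma inner_Amat (H : E × E → ℝ) (z : E × E) (v w : E) :
    ⟪Amat H z v, w⟫ = fderiv ℝ (fderiv ℝ H) z ((0 : E), v) ((0 : E), w) := by
  rw [show Amat H z v = Phi (ContinuousLinearMap.inr ℝ E E)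
    (fderiv ℝ (fderiv ℝ H) z ((0 : E), v)) from rfl, inner_Phi]
  rfl

lemma Amat_symm (H : E × E → ℝ) (hH : ContDiff ℝ 2 H) (z : E × E) (v w : E) : ⟪Amat H z v, w⟫ = ⟪Amat H z w, v⟫ := by
  rw [inner_Amat H z v w, inner_Amat H z w v]
  have h1 : ContDiff ℝ 1 (fderiv ℝ H) := hH.fderiv_right (by norm_num)
  exact second_derivative_symmetric (fun y => (hH.differentiable two_ne_zero y).hasFDerivAt)
    (h1.differentiable one_ne_zero z).hasFDerivAt _ _

lemma Hpp_eq_Amat (H : E × E → ℝ) (hH : ContDiff ℝ 2 H) (z : E × E) (v : E) : Hpp H z v = ⟪Amat H z v, v⟫ := by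
  have hfun : (fun p => gradient (fun p' => H (z.1, p')) p) =
      fun p => Gpart (ContinuousLinearMap.inr ℝ E E) H (z.1, p) := by
    funext p
    exact gradient_snd H hH (z.1, p)
  have h2 : HasFDerivAt (fun p : E => ((z.1, p) : E × E))
      (ContinuousLinearMap.inr ℝ E E) z.2 :=
    (hasFDerivAt_const _ _).prodMk (hasFDerivAt_id z.2)
  have h3 : HasFDerivAt (fun p : E => Gpart (ContinuousLinearMap.inr ℝ E E) H (z.1, p))
      (Amat H z) z.2 := by
    have h4 : HasFDerivAt (Gpart (ContinuousLinearMap.inr ℝ E E) H)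
        ((Phi (ContinuousLinearMap.inr ℝ E E)).comp (fderiv ℝ (fderiv ℝ H) z)) (z.1, z.2) := by
      rw [Prod.mk.eta]; exact Gpart_hasFDerivAt H hH _ z
    exact h4.comp z.2 h2
  rw [Hpp, hfun, h3.fderiv]

end Aux


/-- symmetric operator with quadratic form bounded by `C‖v‖²` has `‖T v‖ ≤ C ‖v‖`. -/
lemma sym_op_norm_bound {F : Type*} [NormedAddCommGroup F] [InnerProductSpace ℝ F]
    (T : F →L[ℝ] F) (hsym : ∀ v w, ⟪T v, w⟫ = ⟪T w, v⟫) {C : ℝ}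
    (hC : ∀ v, |⟪T v, v⟫| ≤ C * ‖v‖ ^ 2) (v : F) : ‖T v‖ ≤ C * ‖v‖ := by
  rcases eq_or_ne v 0 with rfl | hv
  · simp
  have hv' : 0 < ‖v‖ := norm_pos_iff.2 hv
  have hC0 : 0 ≤ C := by
    have h1 := (abs_nonneg ⟪T v, v⟫).trans (hC v)
    nlinarith [pow_pos hv' 2]
  rcases eq_or_ne (T v) 0 with hTv | hTv
  · rw [hTv, norm_zero]; positivity
  have hTv' : 0 < ‖T v‖ := norm_pos_iff.2 hTv
  set w : F := (‖v‖ / ‖T v‖) • T v with hw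
  have hww : ‖w‖ = ‖v‖ := by
    rw [hw, norm_smul, Real.norm_eq_abs, abs_div, abs_of_nonneg hv'.le,
      abs_of_nonneg hTv'.le, div_mul_cancel₀ _ hTv'.ne']
  have hTvw : ⟪T v, w⟫ = ‖v‖ * ‖T v‖ := by
    rw [hw, real_inner_smul_right, real_inner_self_eq_norm_sq]
    field_simp
  have key : ⟪T v, w⟫ = (⟪T (v + w), v + w⟫ - ⟪T (v - w), v - w⟫) / 4 := by
    have h1 := hsym w v
    simp only [map_add, map_sub, inner_add_left, inner_add_right, inner_sub_left,
      inner_sub_right]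
    linarith
  have hpar : ‖v + w‖ ^ 2 + ‖v - w‖ ^ 2 = 2 * (‖v‖ ^ 2 + ‖w‖ ^ 2) := by
    have := parallelogram_law_with_norm ℝ v w
    nlinarith [pow_pos hv' 2]
  have h2 : ⟪T v, w⟫ ≤ C * ‖v‖ ^ 2 := by
    have ha := (hC (v + w)).trans (by nlinarith [sq_nonneg ‖v - w‖, hpar, hww] :
      C * ‖v + w‖ ^ 2 ≤ C * (2 * (‖v‖ ^ 2 + ‖w‖ ^ 2)))
    have hb := hC (v - w)
    have hc : -⟪T (v - w), v - w⟫ ≤ C * ‖v - w‖ ^ 2 := (neg_le_abs _).trans hb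
    have hd : ⟪T (v + w), v + w⟫ ≤ |⟪T (v + w), v + w⟫| := le_abs_self _
    have he := hC (v + w)
    rw [key]
    rw [hww] at hpar
    nlinarith [le_abs_self ⟪T (v - w), v - w⟫]
  rw [hTvw] at h2
  have h3 : ‖v‖ * ‖T v‖ ≤ ‖v‖ * (C * ‖v‖) := by nlinarith
  exact (mul_le_mul_iff_right₀ hv').mp h3

section Main
variable {d : ℕ}

local notation "E" => EuclideanSpace ℝ (Fin d)

theorem stmt10_aux
    (H : E × E → ℝ)
    (hH : ContDiff ℝ 2 H)
    (φ : ℝ → E × E → E × E)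
    (hφ0 : ∀ x, φ 0 x = x)
    (hflow : ∀ x t, HasDerivAt (fun s => φ s x) (HamVF H (φ t x)) t)
    (𝒦 : Set (E × E))
    (h𝒦 : IsCompact 𝒦)
    (h𝒦conv : ∀ q p p', (q, p) ∈ 𝒦 → (q, p') ∈ 𝒦 →
      ∀ s ∈ Set.Icc (0 : ℝ) 1, (q, s • p + (1 - s) • p') ∈ 𝒦)
    (c C : ℝ) (hc : 0 < c) (hcC : c ≤ C)
    (hHess : ∀ τ ∈ Set.Icc (-1 : ℝ) 1, ∀ x ∈ 𝒦, ∀ v,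
      c * ‖v‖ ^ 2 ≤ Hpp H (φ τ x) v ∧ Hpp H (φ τ x) v ≤ C * ‖v‖ ^ 2) :
    ∃ ε > 0, ∀ t ∈ Set.Ioc (0 : ℝ) ε, ∀ q p Δp : E,
      (q, p) ∈ 𝒦 → (q, p + Δp) ∈ 𝒦 →
      (c / 2) * t * ‖Δp‖ ^ 2 ≤
          ⟪(φ t (q, p + Δp)).2 - (φ t (q, p)).2, (φ t (q, p + Δp)).1 - (φ t (q, p)).1⟫ ∧
        ‖(φ t (q, p + Δp)).1 - (φ t (q, p)).1‖ ≤ 2 * C * t * ‖Δp‖ := by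
  classical
  set G : E × E → E := Gpart (ContinuousLinearMap.inr ℝ E E) H with hGdef
  set F : E × E → E := Gpart (ContinuousLinearMap.inl ℝ E E) H with hFdef
  set V : E × E → E × E := HamVF H with hVdef
  have hVF : ∀ z, V z = (G z, -F z) := fun z => by
    rw [hVdef, HamVF, gradient_snd H hH z, gradient_fst H hH z]
  have hGc : ContDiff ℝ 1 G := Gpart_contDiff H hH _
  have hFc : ContDiff ℝ 1 F := Gpart_contDiff H hH _
  have hVc : ContDiff ℝ 1 V := by
    have : V = fun z => (G z, -F z) := funext hVF
    rw [this]; exact hGc.prodMk hFc.neg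
  -- radius bound for 𝒦
  obtain ⟨R₀, hR₀⟩ := h𝒦.exists_bound_of_continuousOn continuousOn_id
  obtain ⟨R, hRdef⟩ : ∃ R : ℝ, R = max R₀ 0 := ⟨_, rfl⟩
  have hR0 : 0 ≤ R := by rw [hRdef]; exact le_max_right _ _
  have hR : ∀ z ∈ 𝒦, ‖z‖ ≤ R := fun z hz => (hR₀ z hz).trans (by rw [hRdef]; exact le_max_left _ _)
  set B : Set (E × E) := Metric.closedBall 0 (R + 1) with hBdef
  have hBcomp : IsCompact B := isCompact_closedBall _ _
  have hBconv : Convex ℝ B := convex_closedBall _ _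
  have h𝒦B : 𝒦 ⊆ B := fun z hz => by
    rw [hBdef, Metric.mem_closedBall, dist_zero_right]
    linarith [hR z hz]
  -- bound for V on B
  obtain ⟨M₀, hM₀⟩ := hBcomp.exists_bound_of_continuousOn (hVc.continuous.continuousOn)
  obtain ⟨M, hMdef⟩ : ∃ M : ℝ, M = max M₀ 0 := ⟨_, rfl⟩
  have hM0 : 0 ≤ M := by rw [hMdef]; exact le_max_right _ _
  have hM : ∀ z ∈ B, ‖V z‖ ≤ M := fun z hz => (hM₀ z hz).trans (by rw [hMdef]; exact le_max_left _ _)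
  -- Lipschitz bound for V on B
  obtain ⟨L₀, hL₀⟩ := hBcomp.exists_bound_of_continuousOn
    ((hVc.continuous_fderiv one_ne_zero).continuousOn)
  obtain ⟨L, hLdef⟩ : ∃ L : ℝ, L = max L₀ 0 := ⟨_, rfl⟩
  have hL0 : 0 ≤ L := by rw [hLdef]; exact le_max_right _ _
  have hL : ∀ z ∈ B, ‖fderiv ℝ V z‖ ≤ L := fun z hz => (hL₀ z hz).trans (by rw [hLdef]; exact le_max_left _ _)
  have hVlip : ∀ y ∈ B, ∀ z ∈ B, ‖V y - V z‖ ≤ L * ‖y - z‖ := fun y hy z hz =>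
    Convex.norm_image_sub_le_of_norm_hasFDerivWithin_le
      (fun w hw => ((hVc.differentiable one_ne_zero) w).hasFDerivAt.hasFDerivWithinAt)
      (fun w hw => hL w hw) hBconv hz hy
  -- bound for DG on B
  obtain ⟨K₀, hK₀⟩ := hBcomp.exists_bound_of_continuousOn
    ((hGc.continuous_fderiv one_ne_zero).continuousOn)
  obtain ⟨K2, hK2def⟩ : ∃ K2 : ℝ, K2 = max K₀ 0 := ⟨_, rfl⟩
  have hK20 : 0 ≤ K2 := by rw [hK2def]; exact le_max_right _ _
  have hK2 : ∀ z ∈ B, ‖fderiv ℝ G z‖ ≤ K2 := fun z hz => (hK₀ z hz).trans (by rw [hK2def]; exact le_max_left _ _)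
  -- uniform continuity of DG on B
  have hUC := hBcomp.uniformContinuousOn_of_continuous
    ((hGc.continuous_fderiv one_ne_zero).continuousOn)
  rw [Metric.uniformContinuousOn_iff] at hUC
  obtain ⟨δ, hδpos, hδ⟩ := hUC (c / 8) (by positivity)
  obtain ⟨K4, hK4def⟩ : ∃ K4 : ℝ, K4 = M + 2 * L * (2 * R) := ⟨_, rfl⟩
  have hK40 : 0 ≤ K4 := by rw [hK4def]; positivity
  have hC0 : 0 < C := lt_of_lt_of_le hc hcC
  obtain ⟨ε, hεdef⟩ : ∃ ε : ℝ, ε = min (min (1 / (2 * (M + 1))) (Real.log 2 / (L + 1)))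
      (min (min (c / (16 * K2 * L + 1)) (δ / (2 * (K4 + 1)))) (c / (16 * L * C + 1))) := ⟨_, rfl⟩
  have hεpos : 0 < ε := by
    rw [hεdef]
    have h2 : (0:ℝ) < Real.log 2 := Real.log_pos one_lt_two
    refine lt_min (lt_min (by positivity) (by positivity)) (lt_min (lt_min ?_ ?_) ?_) <;>
      positivity
  have hε1 : ε ≤ 1 / (2 * (M + 1)) := by
    rw [hεdef]; exact (min_le_left _ _).trans (min_le_left _ _)
  have hε2 : ε ≤ Real.log 2 / (L + 1) := by
    rw [hεdef]; exact (min_le_left _ _).trans (min_le_right _ _)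
  have hε3 : ε ≤ c / (16 * K2 * L + 1) := by
    rw [hεdef]; exact (min_le_right _ _).trans ((min_le_left _ _).trans (min_le_left _ _))
  have hε4 : ε ≤ δ / (2 * (K4 + 1)) := by
    rw [hεdef]; exact (min_le_right _ _).trans ((min_le_left _ _).trans (min_le_right _ _))
  have hε5 : ε ≤ c / (16 * L * C + 1) := by
    rw [hεdef]; exact (min_le_right _ _).trans (min_le_right _ _)
  -- confinement
  have hφcont : ∀ y, Continuous fun s => φ s y := fun y =>
    continuous_iff_continuousAt.2 fun s => (hflow y s).continuousAt
  have hMε : M * ε < 1 / 2 := by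
    have h1 : M * ε ≤ M * (1 / (2 * (M + 1))) := mul_le_mul_of_nonneg_left hε1 hM0
    have h2 : M * (1 / (2 * (M + 1))) < 1 / 2 := by
      rw [mul_one_div, div_lt_iff₀ (by positivity)]
      ring_nf; linarith
    linarith
  have hstay : ∀ y ∈ 𝒦, ∀ s ∈ Icc (0:ℝ) ε, dist (φ s y) y ≤ 1 / 2 := by
    intro y hy
    by_contra hbad
    push_neg at hbad
    obtain ⟨s₁, hs₁, hs₁'⟩ := hbad
    set g : ℝ → ℝ := fun s => dist (φ s y) y with hgdef
    have hgcont : Continuous g := (hφcont y).dist continuous_const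
    set bad : Set ℝ := {s ∈ Icc (0:ℝ) ε | 1 / 2 < g s} with hbaddef
    have hbadne : bad.Nonempty := ⟨s₁, hs₁, hs₁'⟩
    have hbadbdd : BddBelow bad := ⟨0, fun s hs => hs.1.1⟩
    set s₀ : ℝ := sInf bad with hs₀def
    have hs₀cl : s₀ ∈ closure bad := csInf_mem_closure hbadne hbadbdd
    have hsub : closure bad ⊆ Icc 0 ε ∩ {s | 1 / 2 ≤ g s} :=
      closure_minimal (fun s hs => ⟨hs.1, le_of_lt hs.2⟩)
        ((isClosed_Icc).inter (isClosed_le continuous_const hgcont))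
    obtain ⟨hs₀Icc, hs₀ge⟩ := hsub hs₀cl
    rw [mem_setOf_eq] at hs₀ge
    have hgood : ∀ σ ∈ Ico (0:ℝ) s₀, g σ ≤ 1 / 2 := by
      intro σ hσ
      by_contra hσbad
      push_neg at hσbad
      have hmem : σ ∈ bad := ⟨⟨hσ.1, hσ.2.le.trans hs₀Icc.2⟩, hσbad⟩
      exact absurd (csInf_le hbadbdd hmem) (not_le.2 hσ.2)
    have hmemB : ∀ σ ∈ Ico (0:ℝ) s₀, φ σ y ∈ B := by
      intro σ hσ
      have h1 := hgood σ hσ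
      rw [hBdef, Metric.mem_closedBall, dist_zero_right]
      have h2 : ‖φ σ y‖ - ‖y‖ ≤ ‖φ σ y - y‖ := norm_sub_norm_le _ _
      simp only [hgdef, dist_eq_norm] at h1
      have := hR y hy
      linarith
    have hbound := norm_image_sub_le_of_norm_deriv_le_segment'
      (f := fun s => φ s y) (f' := fun s => V (φ s y)) (a := 0) (b := s₀)
      (fun σ _ => (hflow y σ).hasDerivWithinAt)
      (fun σ hσ => hM _ (hmemB σ hσ)) s₀ (right_mem_Icc.2 hs₀Icc.1)
    simp only [hφ0] at hbound
    have hgs₀ : g s₀ ≤ M * s₀ := by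
      simp only [hgdef, dist_eq_norm]; simpa using hbound
    have : M * s₀ ≤ M * ε := mul_le_mul_of_nonneg_left hs₀Icc.2 hM0
    linarith
  have hmemB : ∀ y ∈ 𝒦, ∀ s ∈ Icc (0:ℝ) ε, φ s y ∈ B := by
    intro y hy s hs
    have h1 := hstay y hy s hs
    rw [hBdef, Metric.mem_closedBall, dist_zero_right]
    have h2 : ‖φ s y‖ - ‖y‖ ≤ ‖φ s y - y‖ := norm_sub_norm_le _ _
    rw [dist_eq_norm] at h1
    have := hR y hy
    linarith
  -- distance travelled bound
  have htravel : ∀ y ∈ 𝒦, ∀ s ∈ Icc (0:ℝ) ε, ‖φ s y - y‖ ≤ M * s := by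
    intro y hy s hs
    have hbound := norm_image_sub_le_of_norm_deriv_le_segment'
      (f := fun s => φ s y) (f' := fun s => V (φ s y)) (a := 0) (b := s)
      (fun σ hσ => (hflow y σ).hasDerivWithinAt)
      (fun σ hσ => hM _ (hmemB y hy σ ⟨hσ.1, hσ.2.le.trans hs.2⟩)) s (right_mem_Icc.2 hs.1)
    simp only [hφ0] at hbound
    simpa using hbound
  -- the main estimates
  have hDG : ∀ z : E × E, HasFDerivAt G (fderiv ℝ G z) z := fun z =>
    ((hGc.differentiable one_ne_zero) z).hasFDerivAt
  refine ⟨ε, hεpos, ?_⟩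
  intro t ht q p Δp hqp hqp'
  set x : E × E := (q, p) with hxdef
  set x' : E × E := (q, p + Δp) with hx'def
  have hxB : x ∈ B := h𝒦B hqp
  have hx'B : x' ∈ B := h𝒦B hqp'
  have htIcc : t ∈ Icc (0:ℝ) ε := ⟨ht.1.le, ht.2⟩
  have hΔp2R : ‖Δp‖ ≤ 2 * R := by
    have h1 : ‖p‖ ≤ R := le_trans (norm_snd_le x) (hR x hqp)
    have h2 : ‖p + Δp‖ ≤ R := le_trans (norm_snd_le x') (hR x' hqp')
    have h3 : ‖Δp‖ = ‖(p + Δp) - p‖ := by rw [add_sub_cancel_left]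
    have h4 : ‖(p + Δp) - p‖ ≤ ‖p + Δp‖ + ‖p‖ := norm_sub_le _ _
    linarith
  have hsubx : x' - x = ((0 : E), Δp) := by
    rw [hx'def, hxdef, Prod.mk_sub_mk, sub_self, add_sub_cancel_left]
  have hnormw0 : ‖((0 : E), Δp)‖ = ‖Δp‖ := by
    rw [Prod.norm_def]
    simp [max_eq_right (norm_nonneg Δp)]
  set w : ℝ → E × E := fun s => φ s x' - φ s x with hwdef
  have hw0 : w 0 = ((0 : E), Δp) := by
    simp only [hwdef, hφ0]; exact hsubx
  have hw' : ∀ s, HasDerivAt w (V (φ s x') - V (φ s x)) s := fun s =>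
    (hflow x' s).sub (hflow x s)
  have hgron : ∀ s ∈ Icc (0:ℝ) ε, ‖w s‖ ≤ ‖Δp‖ * Real.exp (L * s) := by
    intro s hs
    have h := norm_le_gronwallBound_of_norm_deriv_right_le (f := w)
      (f' := fun s => V (φ s x') - V (φ s x)) (δ := ‖Δp‖) (K := L) (ε := 0) (a := 0) (b := ε)
      (fun σ _ => ((hw' σ).continuousAt).continuousWithinAt)
      (fun σ _ => (hw' σ).hasDerivWithinAt)
      (by rw [hw0, hnormw0])
      (fun σ hσ => by
        have hσε : σ ∈ Icc (0:ℝ) ε := ⟨hσ.1, hσ.2.le⟩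
        have h1 := hVlip _ (hmemB x' hqp' σ hσε) _ (hmemB x hqp σ hσε)
        rw [add_zero]
        exact h1)
      s hs
    rwa [gronwallBound_ε0, sub_zero] at h
  have hexp : ∀ s ∈ Icc (0:ℝ) ε, Real.exp (L * s) ≤ 2 := by
    intro s hs
    have hlog : (0:ℝ) ≤ Real.log 2 := (Real.log_pos one_lt_two).le
    have h2 : L * s ≤ L * ε := mul_le_mul_of_nonneg_left hs.2 hL0
    have h3 : L * ε ≤ L * (Real.log 2 / (L + 1)) := mul_le_mul_of_nonneg_left hε2 hL0
    have h4 : L * (Real.log 2 / (L + 1)) ≤ Real.log 2 := by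
      rw [mul_comm, div_mul_eq_mul_div, div_le_iff₀ (by positivity)]
      nlinarith
    have h5 : Real.exp (L * s) ≤ Real.exp (Real.log 2) := Real.exp_le_exp.2 (by linarith)
    rwa [Real.exp_log two_pos] at h5
  have hwb : ∀ s ∈ Icc (0:ℝ) ε, ‖w s‖ ≤ 2 * ‖Δp‖ := by
    intro s hs
    have h1 := (hgron s hs).trans
      (mul_le_mul_of_nonneg_left (hexp s hs) (norm_nonneg Δp))
    linarith
  have hwdiff : ∀ s ∈ Icc (0:ℝ) ε, ‖w s - ((0:E), Δp)‖ ≤ 2 * L * ‖Δp‖ * s := by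
    intro s hs
    have hbound := norm_image_sub_le_of_norm_deriv_le_segment'
      (f := w) (f' := fun σ => V (φ σ x') - V (φ σ x)) (a := 0) (b := s)
      (C := 2 * L * ‖Δp‖)
      (fun σ _ => (hw' σ).hasDerivWithinAt)
      (fun σ hσ => by
        have hσε : σ ∈ Icc (0:ℝ) ε := ⟨hσ.1, hσ.2.le.trans hs.2⟩
        have h1 := hVlip _ (hmemB x' hqp' σ hσε) _ (hmemB x hqp σ hσε)
        have h2 := hwb σ hσε
        have h3 : L * ‖w σ‖ ≤ L * (2 * ‖Δp‖) := mul_le_mul_of_nonneg_left h2 hL0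
        calc ‖V (φ σ x') - V (φ σ x)‖ ≤ L * ‖φ σ x' - φ σ x‖ := h1
        _ = L * ‖w σ‖ := rfl
        _ ≤ 2 * L * ‖Δp‖ := by linarith)
      s (right_mem_Icc.2 hs.1)
    rw [hw0] at hbound
    rw [sub_zero] at hbound
    exact hbound
  -- bound on 2 K2 L ε
  have hK2Lε : 2 * K2 * L * ε ≤ c / 8 := by
    have hA : (0:ℝ) ≤ 2 * K2 * L := by positivity
    have hB := mul_le_mul_of_nonneg_left hε3 hA
    have hCc : 2 * K2 * L * (c / (16 * K2 * L + 1)) ≤ c / 8 := by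
      rw [← mul_div_assoc, div_le_div_iff₀ (by positivity) (by norm_num)]
      nlinarith [hK20, hL0, hc.le]
    linarith
  have hK4ε : K4 * ε < δ := by
    have hA := mul_le_mul_of_nonneg_left hε4 hK40
    have hB : K4 * (δ / (2 * (K4 + 1))) ≤ δ / 2 := by
      rw [← mul_div_assoc, div_le_div_iff₀ (by positivity) (by norm_num)]
      nlinarith [hK40, hδpos.le]
    have hAB : K4 * ε ≤ δ / 2 := hA.trans hB
    linarith [hδpos]
  have ealg1 : ∀ (a b u v : E × E) (r : ℝ),
      (a + r • u) - (b + r • v) = (a - b) + r • (u - v) := by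
    intro a b u v r; rw [smul_sub]; abel
  have ealg2 : ∀ (T1 T2 : (E × E) →L[ℝ] E) (u v : E × E),
      T1 u - T2 v = (T1 - T2) v + T1 (u - v) := by
    intro T1 T2 u v; rw [ContinuousLinearMap.sub_apply, map_sub]; abel
  -- the key second-order estimate
  have hQdiff : ∀ s ∈ Icc (0:ℝ) ε,
      ‖(G (φ s x') - G (φ s x)) - (G x' - G x)‖ ≤ c / 4 * ‖Δp‖ := by
    intro s hs
    set ρ : ℝ → E := fun r => G (φ s x + r • w s) - G (x + r • ((0:E), Δp)) with hρdef
    have hρ' : ∀ r : ℝ, HasDerivAt ρ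
        ((fderiv ℝ G (φ s x + r • w s)) (w s) -
          (fderiv ℝ G (x + r • ((0:E), Δp))) ((0:E), Δp)) r := by
      intro r
      have h1 : HasDerivAt (fun r : ℝ => φ s x + r • w s) (w s) r := by
        simpa using ((hasDerivAt_id r).smul_const (w s)).const_add (φ s x)
      have h2 : HasDerivAt (fun r : ℝ => x + r • ((0:E), Δp)) ((0:E), Δp) r := by
        simpa using ((hasDerivAt_id r).smul_const ((0:E), Δp)).const_add x
      exact ((hDG _).comp_hasDerivAt r h1).sub ((hDG _).comp_hasDerivAt r h2)
    have hbound := norm_image_sub_le_of_norm_deriv_le_segment'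
      (f := ρ) (f' := fun r => (fderiv ℝ G (φ s x + r • w s)) (w s) -
          (fderiv ℝ G (x + r • ((0:E), Δp))) ((0:E), Δp))
      (a := 0) (b := 1) (C := c / 8 * ‖Δp‖ + K2 * (2 * L * ‖Δp‖ * s))
      (fun r _ => (hρ' r).hasDerivWithinAt)
      (fun r hr => by
        have hr01 : r ∈ Icc (0:ℝ) 1 := ⟨hr.1, hr.2.le⟩
        have hz1B : (φ s x + r • w s) ∈ B := by
          have := hBconv.add_smul_sub_mem (hmemB x hqp s hs) (hmemB x' hqp' s hs) hr01
          exact this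
        have hz0B : (x + r • ((0:E), Δp)) ∈ B := by
          have := hBconv.add_smul_sub_mem hxB hx'B hr01
          rwa [hsubx] at this
        have hdist : dist (φ s x + r • w s) (x + r • ((0:E), Δp)) < δ := by
          have e1 : (φ s x + r • w s) - (x + r • ((0:E), Δp)) =
              (φ s x - x) + r • (w s - ((0:E), Δp)) := ealg1 _ _ _ _ _
          rw [dist_eq_norm, e1]
          have h1 : ‖(φ s x - x) + r • (w s - ((0:E), Δp))‖ ≤
              ‖φ s x - x‖ + ‖r • (w s - ((0:E), Δp))‖ := norm_add_le _ _
          have h2 : ‖r • (w s - ((0:E), Δp))‖ = r * ‖w s - ((0:E), Δp)‖ := by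
            rw [norm_smul, Real.norm_eq_abs, abs_of_nonneg hr.1]
          have h3 := hwdiff s hs
          have h4 := htravel x hqp s hs
          have h5 : r * ‖w s - ((0:E), Δp)‖ ≤ ‖w s - ((0:E), Δp)‖ :=
            mul_le_of_le_one_left (norm_nonneg _) hr.2.le
          have h6a : 2 * L * ‖Δp‖ ≤ 2 * L * (2 * R) :=
            mul_le_mul_of_nonneg_left hΔp2R (by positivity)
          have h6 : 2 * L * ‖Δp‖ * s ≤ 2 * L * (2 * R) * s :=
            mul_le_mul_of_nonneg_right h6a hs.1
          have h7 : M * s + 2 * L * (2 * R) * s = K4 * s := by rw [hK4def]; ring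
          have h8 : K4 * s ≤ K4 * ε := mul_le_mul_of_nonneg_left hs.2 hK40
          linarith
        have hδ' := hδ _ hz1B _ hz0B hdist
        rw [dist_eq_norm] at hδ'
        have e2 : (fderiv ℝ G (φ s x + r • w s)) (w s) -
            (fderiv ℝ G (x + r • ((0:E), Δp))) ((0:E), Δp) =
            (fderiv ℝ G (φ s x + r • w s) - fderiv ℝ G (x + r • ((0:E), Δp))) ((0:E), Δp)
              + (fderiv ℝ G (φ s x + r • w s)) (w s - ((0:E), Δp)) := ealg2 _ _ _ _
        show ‖(fderiv ℝ G (φ s x + r • w s)) (w s) -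
            (fderiv ℝ G (x + r • ((0:E), Δp))) ((0:E), Δp)‖ ≤
            c / 8 * ‖Δp‖ + K2 * (2 * L * ‖Δp‖ * s)
        rw [e2]
        have h9 : ‖(fderiv ℝ G (φ s x + r • w s) - fderiv ℝ G (x + r • ((0:E), Δp)))
            ((0:E), Δp)‖ ≤ c / 8 * ‖Δp‖ := by
          have h9a := ContinuousLinearMap.le_opNorm
            (fderiv ℝ G (φ s x + r • w s) - fderiv ℝ G (x + r • ((0:E), Δp))) ((0:E), Δp)
          rw [hnormw0] at h9a
          exact h9a.trans (mul_le_mul_of_nonneg_right hδ'.le (norm_nonneg Δp))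
        have h10 : ‖(fderiv ℝ G (φ s x + r • w s)) (w s - ((0:E), Δp))‖ ≤
            K2 * (2 * L * ‖Δp‖ * s) := by
          have h11 := ContinuousLinearMap.le_opNorm
            (fderiv ℝ G (φ s x + r • w s)) (w s - ((0:E), Δp))
          have h12 := hK2 _ hz1B
          have h13 := hwdiff s hs
          exact h11.trans (mul_le_mul h12 h13 (norm_nonneg _) hK20)
        calc ‖_ + _‖ ≤ _ + _ := norm_add_le _ _
        _ ≤ c / 8 * ‖Δp‖ + K2 * (2 * L * ‖Δp‖ * s) := add_le_add h9 h10)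
      1 (right_mem_Icc.2 zero_le_one)
    have ea : φ s x + (1:ℝ) • w s = φ s x' := by
      rw [one_smul]
      show φ s x + (φ s x' - φ s x) = φ s x'
      abel
    have eb : x + (1:ℝ) • ((0:E), Δp) = x' := by
      rw [one_smul, ← hsubx]; abel
    have e3 : ρ 1 = G (φ s x') - G x' := by
      simp only [hρdef]
      rw [ea, eb]
    have e4 : ρ 0 = G (φ s x) - G x := by
      simp only [hρdef, zero_smul, add_zero]
    rw [e3, e4] at hbound
    have e5 : (G (φ s x') - G x') - (G (φ s x) - G x) =
        (G (φ s x') - G (φ s x)) - (G x' - G x) := by abel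
    rw [e5] at hbound
    have h14 : K2 * (2 * L * ‖Δp‖ * s) ≤ c / 8 * ‖Δp‖ := by
      have h15 : K2 * (2 * L * ‖Δp‖ * s) = (2 * K2 * L * s) * ‖Δp‖ := by ring
      have h16 : 2 * K2 * L * s ≤ 2 * K2 * L * ε :=
        mul_le_mul_of_nonneg_left hs.2 (by positivity)
      have h15b : c / 8 * ‖Δp‖ = c / 8 * ‖Δp‖ := rfl
      rw [h15]
      exact mul_le_mul_of_nonneg_right (h16.trans hK2Lε) (norm_nonneg Δp)
    have := hbound
    rw [sub_zero, mul_one] at this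
    linarith [this, h14]
  -- bounds on the 0-time increment D
  have hHess0 : ∀ z ∈ 𝒦, ∀ v : E,
      c * ‖v‖ ^ 2 ≤ ⟪Amat H z v, v⟫ ∧ ⟪Amat H z v, v⟫ ≤ C * ‖v‖ ^ 2 := by
    intro z hz v
    have h := hHess 0 (by norm_num) z hz v
    rwa [hφ0 z, Hpp_eq_Amat H hH] at h
  have hAop : ∀ z ∈ 𝒦, ∀ v : E, ‖Amat H z v‖ ≤ C * ‖v‖ := by
    intro z hz v
    refine sym_op_norm_bound _ (Amat_symm H hH z) (fun u => ?_) v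
    have h := hHess0 z hz u
    have h2 : (0:ℝ) ≤ c * ‖u‖ ^ 2 := by positivity
    have h3 : (0:ℝ) ≤ C * ‖u‖ ^ 2 := by positivity
    rw [abs_le]
    exact ⟨by linarith [h.1], h.2⟩
  have hseg𝒦 : ∀ r ∈ Icc (0:ℝ) 1, ((q, p + r • Δp) : E × E) ∈ 𝒦 := by
    intro r hr
    have h := h𝒦conv q (p + Δp) p hqp' hqp r hr
    have e : r • (p + Δp) + (1 - r) • p = p + r • Δp := by
      rw [smul_add, sub_smul, one_smul]; abel
    rwa [e] at h
  have hσ' : ∀ r : ℝ, HasDerivAt (fun r : ℝ => G (q, p + r • Δp))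
      (Amat H (q, p + r • Δp) Δp) r := by
    intro r
    have h1 : HasDerivAt (fun r : ℝ => ((q, p + r • Δp) : E × E)) (((0:E), Δp)) r := by
      apply HasDerivAt.prodMk (hasDerivAt_const _ _)
      simpa using ((hasDerivAt_id r).smul_const Δp).const_add p
    have h2 : HasFDerivAt G
        ((Phi (ContinuousLinearMap.inr ℝ E E)).comp
          (fderiv ℝ (fderiv ℝ H) (q, p + r • Δp))) (q, p + r • Δp) := by
      rw [hGdef]; exact Gpart_hasFDerivAt H hH _ _
    have h3 := h2.comp_hasDerivAt r h1
    exact h3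
  set D : E := G x' - G x with hDdef
  have hDub : ‖D‖ ≤ C * ‖Δp‖ := by
    have hmv := norm_image_sub_le_of_norm_deriv_le_segment'
      (f := fun r : ℝ => G (q, p + r • Δp)) (f' := fun r => Amat H (q, p + r • Δp) Δp)
      (a := 0) (b := 1) (C := C * ‖Δp‖)
      (fun r _ => (hσ' r).hasDerivWithinAt)
      (fun r hr => hAop _ (hseg𝒦 r ⟨hr.1, hr.2.le⟩) Δp)
      1 (right_mem_Icc.2 zero_le_one)
    simp only [one_smul, zero_smul, add_zero, sub_zero, mul_one] at hmv
    rw [hDdef, hx'def, hxdef]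
    exact hmv
  have hDlb : c * ‖Δp‖ ^ 2 ≤ ⟪D, Δp⟫ := by
    set ψ : ℝ → ℝ := fun r => ⟪G (q, p + r • Δp), Δp⟫ - r * (c * ‖Δp‖ ^ 2) with hψdef
    have hψ' : ∀ r : ℝ, HasDerivAt ψ
        (⟪Amat H (q, p + r • Δp) Δp, Δp⟫ - c * ‖Δp‖ ^ 2) r := by
      intro r
      have h1 := HasDerivAt.inner ℝ (hσ' r) (hasDerivAt_const r Δp)
      have h2 : HasDerivAt (fun t : ℝ => t * (c * ‖Δp‖ ^ 2)) (c * ‖Δp‖ ^ 2) r := by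
        simpa using (hasDerivAt_id r).mul_const (c * ‖Δp‖ ^ 2)
      have h3 := h1.sub h2
      simpa [hψdef, Pi.sub_def] using h3
    have hmono : MonotoneOn ψ (Icc (0:ℝ) 1) := by
      apply monotoneOn_of_deriv_nonneg (convex_Icc 0 1)
      · exact (continuous_iff_continuousAt.2 fun r => (hψ' r).continuousAt).continuousOn
      · intro r _
        exact ((hψ' r).differentiableAt).differentiableWithinAt
      · intro r hr
        rw [(hψ' r).deriv]
        rw [interior_Icc] at hr
        have h := (hHess0 _ (hseg𝒦 r ⟨hr.1.le, hr.2.le⟩) Δp).1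
        linarith
    have h01 := hmono (left_mem_Icc.2 zero_le_one) (right_mem_Icc.2 zero_le_one) zero_le_one
    simp only [hψdef, zero_smul, add_zero, one_smul, zero_mul, one_mul, sub_zero] at h01
    have e : ⟪D, Δp⟫ = ⟪G x', Δp⟫ - ⟪G x, Δp⟫ := by
      rw [hDdef, inner_sub_left]
    rw [e, hx'def, hxdef]
    linarith
  -- derivatives of the coordinates
  have hVfst : ∀ z : E × E, (ContinuousLinearMap.fst ℝ E E) (V z) = G z := fun z => by
    rw [hVF z]; rfl
  have hQ' : ∀ s : ℝ, HasDerivAt (fun s => (φ s x').1 - (φ s x).1)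
      (G (φ s x') - G (φ s x)) s := by
    intro s
    have h1 := (ContinuousLinearMap.fst ℝ E E).hasFDerivAt.comp_hasDerivAt s (hflow x' s)
    have h2 := (ContinuousLinearMap.fst ℝ E E).hasFDerivAt.comp_hasDerivAt s (hflow x s)
    have h3 := h1.sub h2
    rw [hVfst, hVfst] at h3
    exact h3
  have hP' : ∀ s : ℝ, HasDerivAt (fun s => (φ s x').2 - (φ s x).2)
      ((V (φ s x') - V (φ s x)).2) s := fun s =>
    (ContinuousLinearMap.snd ℝ E E).hasFDerivAt.comp_hasDerivAt s
      ((hflow x' s).sub (hflow x s))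
  -- assembling at time t
  have hQt : ‖((φ t x').1 - (φ t x).1) - t • D‖ ≤ c / 4 * ‖Δp‖ * t := by
    have hmv := norm_image_sub_le_of_norm_deriv_le_segment'
      (f := fun s => ((φ s x').1 - (φ s x).1) - s • D)
      (f' := fun s => (G (φ s x') - G (φ s x)) - D) (a := 0) (b := t)
      (C := c / 4 * ‖Δp‖)
      (fun s _ => by
        have hd : HasDerivAt (fun s : ℝ => s • D) D s := by
          simpa using (hasDerivAt_id s).smul_const D
        exact ((hQ' s).sub hd).hasDerivWithinAt)
      (fun s hs => hQdiff s ⟨hs.1, hs.2.le.trans ht.2⟩)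
      t (right_mem_Icc.2 ht.1.le)
    simp only [hφ0, zero_smul, sub_zero] at hmv
    have e : x'.1 - x.1 = 0 := by rw [hx'def, hxdef]; simp
    rw [e] at hmv
    rw [sub_zero] at hmv
    linarith [hmv]
  have htD : ‖t • D‖ ≤ t * (C * ‖Δp‖) := by
    rw [norm_smul, Real.norm_eq_abs, abs_of_nonneg ht.1.le]
    exact mul_le_mul_of_nonneg_left hDub ht.1.le
  have hQnorm : ‖(φ t x').1 - (φ t x).1‖ ≤ 2 * C * t * ‖Δp‖ := by
    have e : (φ t x').1 - (φ t x).1 = t • D + (((φ t x').1 - (φ t x).1) - t • D) := by abel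
    rw [e]
    have h2 : c / 4 ≤ C := by linarith
    calc ‖t • D + (((φ t x').1 - (φ t x).1) - t • D)‖
        ≤ ‖t • D‖ + ‖((φ t x').1 - (φ t x).1) - t • D‖ := norm_add_le _ _
      _ ≤ t * (C * ‖Δp‖) + c / 4 * ‖Δp‖ * t := add_le_add htD hQt
      _ ≤ 2 * C * t * ‖Δp‖ := by
          nlinarith [mul_nonneg (mul_nonneg (sub_nonneg.2 h2) ht.1.le) (norm_nonneg Δp)]
  have hPt : ‖((φ t x').2 - (φ t x).2) - Δp‖ ≤ 2 * L * ‖Δp‖ * t := by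
    have hmv := norm_image_sub_le_of_norm_deriv_le_segment'
      (f := fun s => (φ s x').2 - (φ s x).2) (f' := fun s => (V (φ s x') - V (φ s x)).2)
      (a := 0) (b := t) (C := 2 * L * ‖Δp‖)
      (fun s _ => (hP' s).hasDerivWithinAt)
      (fun s hs => by
        have hsε : s ∈ Icc (0:ℝ) ε := ⟨hs.1, hs.2.le.trans ht.2⟩
        have h1 : ‖(V (φ s x') - V (φ s x)).2‖ ≤ ‖V (φ s x') - V (φ s x)‖ := norm_snd_le _
        have h2 := hVlip _ (hmemB x' hqp' s hsε) _ (hmemB x hqp s hsε)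
        have h3 := hwb s hsε
        have h4 : L * ‖φ s x' - φ s x‖ ≤ L * (2 * ‖Δp‖) := by
          have : ‖φ s x' - φ s x‖ = ‖w s‖ := rfl
          rw [this]
          exact mul_le_mul_of_nonneg_left h3 hL0
        calc ‖(V (φ s x') - V (φ s x)).2‖ ≤ ‖V (φ s x') - V (φ s x)‖ := h1
        _ ≤ L * ‖φ s x' - φ s x‖ := h2
        _ ≤ 2 * L * ‖Δp‖ := by linarith)
      t (right_mem_Icc.2 ht.1.le)
    simp only [hφ0] at hmv
    have e : x'.2 - x.2 = Δp := by rw [hx'def, hxdef]; simp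
    rw [e, sub_zero] at hmv
    linarith [hmv]
  constructor
  · -- inner product lower bound
    set Qt : E := (φ t x').1 - (φ t x).1 with hQtdef
    set Pt : E := (φ t x').2 - (φ t x).2 with hPtdef
    have hiq : t * (c * ‖Δp‖ ^ 2) - ‖Δp‖ * (c / 4 * ‖Δp‖ * t) ≤ ⟪Δp, Qt⟫ := by
      have h1 : ⟪Δp, Qt⟫ = ⟪Δp, t • D⟫ + ⟪Δp, Qt - t • D⟫ := by
        rw [← inner_add_right, show t • D + (Qt - t • D) = Qt from by abel]
      have h2 : ⟪Δp, t • D⟫ = t * ⟪D, Δp⟫ := by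
        rw [real_inner_smul_right, real_inner_comm]
      have h3 : |⟪Δp, Qt - t • D⟫| ≤ ‖Δp‖ * ‖Qt - t • D‖ := abs_real_inner_le_norm _ _
      have h4 := mul_le_mul_of_nonneg_left hQt (norm_nonneg Δp)
      have h5 : t * (c * ‖Δp‖ ^ 2) ≤ t * ⟪D, Δp⟫ :=
        mul_le_mul_of_nonneg_left hDlb ht.1.le
      have h6 := neg_abs_le ⟪Δp, Qt - t • D⟫
      rw [h1, h2]
      linarith
    have hpq : ⟪Pt, Qt⟫ = ⟪Δp, Qt⟫ + ⟪Pt - Δp, Qt⟫ := by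
      rw [← inner_add_left, show Δp + (Pt - Δp) = Pt from by abel]
    have h6 : |⟪Pt - Δp, Qt⟫| ≤ ‖Pt - Δp‖ * ‖Qt‖ := abs_real_inner_le_norm _ _
    have h2Lt : (0:ℝ) ≤ 2 * L * ‖Δp‖ * t := mul_nonneg (by positivity) ht.1.le
    have h7 : ‖Pt - Δp‖ * ‖Qt‖ ≤ (2 * L * ‖Δp‖ * t) * (2 * C * t * ‖Δp‖) :=
      mul_le_mul hPt hQnorm (norm_nonneg _) h2Lt
    have h9 : 4 * L * C * t ≤ c / 4 := by
      have hA : (0:ℝ) ≤ 4 * L * C := by positivity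
      have hB := mul_le_mul_of_nonneg_left (ht.2.trans hε5) hA
      have hCc : 4 * L * C * (c / (16 * L * C + 1)) ≤ c / 4 := by
        rw [← mul_div_assoc, div_le_div_iff₀ (by positivity) (by norm_num)]
        nlinarith [hL0, hC0.le, hc.le]
      linarith
    have h8 : (2 * L * ‖Δp‖ * t) * (2 * C * t * ‖Δp‖) ≤ c / 4 * t * ‖Δp‖ ^ 2 := by
      have e : (2 * L * ‖Δp‖ * t) * (2 * C * t * ‖Δp‖) = (4 * L * C * t) * (t * ‖Δp‖ ^ 2) := by
        ring
      rw [e]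
      calc (4 * L * C * t) * (t * ‖Δp‖ ^ 2) ≤ (c / 4) * (t * ‖Δp‖ ^ 2) :=
            mul_le_mul_of_nonneg_right h9 (mul_nonneg ht.1.le (sq_nonneg _))
        _ = c / 4 * t * ‖Δp‖ ^ 2 := by ring
    have h10 := neg_abs_le ⟪Pt - Δp, Qt⟫
    rw [hpq]
    linarith [hiq, h6, h7, h8, h10]
  · exact hQnorm

end Main

/-- quantitative twist estimates for the Hamiltonian flow of a `C²` Hamiltonian
with fiberwise-convex compact `𝒦` and `c‖v‖² ≤ H_{pp}(φ_τ x)(v,v) ≤ C‖v‖²`. -/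
theorem stmt10 {d : ℕ}
    (H : EuclideanSpace ℝ (Fin d) × EuclideanSpace ℝ (Fin d) → ℝ)
    (hH : ContDiff ℝ 2 H)
    (φ : ℝ → EuclideanSpace ℝ (Fin d) × EuclideanSpace ℝ (Fin d) →
      EuclideanSpace ℝ (Fin d) × EuclideanSpace ℝ (Fin d))
    (hφ0 : ∀ x, φ 0 x = x)
    (hflow : ∀ x t, HasDerivAt (fun s => φ s x) (HamVF H (φ t x)) t)
    (𝒦 : Set (EuclideanSpace ℝ (Fin d) × EuclideanSpace ℝ (Fin d)))
    (h𝒦 : IsCompact 𝒦)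
    (h𝒦conv : ∀ q p p', (q, p) ∈ 𝒦 → (q, p') ∈ 𝒦 →
      ∀ s ∈ Set.Icc (0 : ℝ) 1, (q, s • p + (1 - s) • p') ∈ 𝒦)
    (c C : ℝ) (hc : 0 < c) (hcC : c ≤ C)
    (hHess : ∀ τ ∈ Set.Icc (-1 : ℝ) 1, ∀ x ∈ 𝒦, ∀ v,
      c * ‖v‖ ^ 2 ≤ Hpp H (φ τ x) v ∧ Hpp H (φ τ x) v ≤ C * ‖v‖ ^ 2) :
    ∃ ε > 0, ∀ t ∈ Set.Ioc (0 : ℝ) ε, ∀ q p Δp : EuclideanSpace ℝ (Fin d),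
      (q, p) ∈ 𝒦 → (q, p + Δp) ∈ 𝒦 →
      (c / 2) * t * ‖Δp‖ ^ 2 ≤
          ⟪(φ t (q, p + Δp)).2 - (φ t (q, p)).2, (φ t (q, p + Δp)).1 - (φ t (q, p)).1⟫ ∧
        ‖(φ t (q, p + Δp)).1 - (φ t (q, p)).1‖ ≤ 2 * C * t * ‖Δp‖ := by
  exact stmt10_aux H hH φ hφ0 hflow 𝒦 h𝒦 h𝒦conv c C hc hcC hHess
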